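/- Let P be a 3×3 row-stochastic matrix with stationary probability row vector μ, set Q = P − I, and suppose the characteristic polynomial of Q is X(X + λ1)(X + λ2) with λ1, λ2 ≠ 0 and λ1 ≠ λ2. Then for every positive integer n, Pⁿ = g_n·L + d_n·Q + f_n·I, where d_n = ((1 − λ2)ⁿ − (1 − λ1)ⁿ)/(λ1 − λ2), f_n = (λ1(1 − λ2)ⁿ − λ2(1 − λ1)ⁿ)/(λ1 − λ2), g_n = 1 − f_n, and L = e·μ is the 3×3 matrix each of whose rows equals μ. -/

import Mathlib

open Matrix Polynomial

private lemma cubic_CH (M : Matrix (Fin 3) (Fin 3) ℝ) :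
    M * M * M = (Matrix.trace M) • (M * M)
      - (((Matrix.trace M) ^ 2 - Matrix.trace (M * M)) / 2) • M
      + (M.det) • (1 : Matrix (Fin 3) (Fin 3) ℝ) := by
  ext i j
  fin_cases i <;> fin_cases j <;>
    simp [Matrix.mul_apply, Fin.sum_univ_three, Matrix.trace, Matrix.diag,
      Matrix.det_fin_three, Matrix.one_apply] <;> ring

private lemma det_one_sub_fin3 (M : Matrix (Fin 3) (Fin 3) ℝ) :
    (1 - M).det = 1 - Matrix.trace M
      + ((Matrix.trace M) ^ 2 - Matrix.trace (M * M)) / 2 - M.det := by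
  simp [Matrix.det_fin_three, Matrix.trace, Matrix.diag, Matrix.mul_apply,
    Fin.sum_univ_three, Matrix.one_apply]
  ring

/-- For a 3×3 row-stochastic matrix `P` with stationary probability
row vector `μ`, with `Q = P − I` having characteristic polynomial `X(X+λ₁)(X+λ₂)`,
`λ₁, λ₂ ≠ 0`, `λ₁ ≠ λ₂`, the `n`-step transition probability matrix satisfies
`Pⁿ = g_n·L + d_n·Q + f_n·I` where `L = e·μ`,
`d_n = ((1−λ₂)ⁿ − (1−λ₁)ⁿ)/(λ₁−λ₂)`,
`f_n = (λ₁(1−λ₂)ⁿ − λ₂(1−λ₁)ⁿ)/(λ₁−λ₂)` and `g_n = 1 − f_n`. -/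
theorem pow_eq_gL_add_dQ_add_fI (P : Matrix (Fin 3) (Fin 3) ℝ) (μ : Fin 3 → ℝ)
    (lam1 lam2 : ℝ)
    (hP0 : ∀ i j : Fin 3, 0 ≤ P i j)
    (hP1 : ∀ i : Fin 3, ∑ j, P i j = 1)
    (hpos : ∀ i, 0 < μ i) (hsum : μ 0 + μ 1 + μ 2 = 1)
    (hstat : μ ᵥ* P = μ)
    (hchar : (P - 1).charpoly = X * (X + C lam1) * (X + C lam2))
    (hlam1 : lam1 ≠ 0) (hlam2 : lam2 ≠ 0) (hne : lam1 ≠ lam2) :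
    ∀ n : ℕ, 1 ≤ n →
      P ^ n =
        (1 - (lam1 * (1 - lam2) ^ n - lam2 * (1 - lam1) ^ n) / (lam1 - lam2)) •
            Matrix.vecMulVec (fun _ => (1 : ℝ)) μ
          + (((1 - lam2) ^ n - (1 - lam1) ^ n) / (lam1 - lam2)) • (P - 1)
          + ((lam1 * (1 - lam2) ^ n - lam2 * (1 - lam1) ^ n) / (lam1 - lam2)) •
              (1 : Matrix (Fin 3) (Fin 3) ℝ) := by
  have hne' : lam1 - lam2 ≠ 0 := sub_ne_zero.mpr hne
  set s : ℝ := lam1 + lam2 with hs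
  set p : ℝ := lam1 * lam2 with hp
  have hpne : p ≠ 0 := mul_ne_zero hlam1 hlam2
  set Q : Matrix (Fin 3) (Fin 3) ℝ := P - 1 with hQdef
  set L : Matrix (Fin 3) (Fin 3) ℝ := Matrix.vecMulVec (fun _ => (1 : ℝ)) μ with hLdef
  have hμsum : ∑ k : Fin 3, μ k = 1 := by rw [Fin.sum_univ_three]; exact hsum
  -- basic multiplicative facts
  have hPL : P * L = L := by
    ext i j
    simp only [Matrix.mul_apply, hLdef, Matrix.vecMulVec_apply, one_mul]
    rw [← Finset.sum_mul, hP1 i, one_mul]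
  have hLP : L * P = L := by
    ext i j
    simp only [Matrix.mul_apply, hLdef, Matrix.vecMulVec_apply, one_mul]
    have := congrFun hstat j
    simpa [Matrix.vecMul, dotProduct] using this
  have hLL : L * L = L := by
    ext i j
    simp only [Matrix.mul_apply, hLdef, Matrix.vecMulVec_apply, one_mul]
    rw [← Finset.sum_mul, hμsum, one_mul]
  have hQL : Q * L = 0 := by rw [hQdef, sub_mul, hPL, one_mul, sub_self]
  have hLQ : L * Q = 0 := by rw [hQdef, mul_sub, hLP, mul_one, sub_self]
  have htrL : Matrix.trace L = 1 := by
    simp [hLdef, Matrix.trace, Matrix.diag, Fin.sum_univ_three, Matrix.vecMulVec_apply]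
    exact hsum
  -- charpoly consequences
  have hpoly : (X : ℝ[X]) * (X + C lam1) * (X + C lam2)
      = X ^ 3 + C s * X ^ 2 + C p * X := by
    rw [hs, hp, C_add, C_mul]; ring
  have htrQ : Matrix.trace Q = -s := by
    have h := Matrix.trace_eq_neg_charpoly_coeff Q
    rw [hchar, hpoly] at h
    simpa [hs, coeff_X, coeff_one, coeff_X_pow, add_mul, coeff_C_mul, neg_add] using h
  have hdetQ : Q.det = 0 := by
    have h := Matrix.det_eq_sign_charpoly_coeff Q
    rw [hchar, hpoly] at h
    simpa using h
  have hdet1Q : (1 - Q).det = (1 + lam1) * (1 + lam2) := by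
    have h : Polynomial.eval 1 Q.charpoly = (1 - Q).det := by
      rw [Matrix.charpoly, eval_det, Matrix.matPolyEquiv_charmatrix]
      simp
    rw [hchar] at h
    rw [← h]
    simp
  have htrQ2 : Matrix.trace (Q * Q) = s ^ 2 - 2 * p := by
    have h := det_one_sub_fin3 Q
    rw [hdet1Q, htrQ, hdetQ] at h
    have : (1 + lam1) * (1 + lam2) = 1 + s + p := by rw [hs, hp]; ring
    rw [this] at h
    linear_combination 2 * h
  have hCH : Q * ((Q + lam1 • 1) * (Q + lam2 • 1)) = 0 := by
    have h := Matrix.aeval_self_charpoly Q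
    rw [hchar] at h
    simp only [_root_.map_mul, map_add, aeval_X, aeval_C,
      Algebra.algebraMap_eq_smul_one] at h
    rw [mul_assoc] at h
    exact h
  -- the quadratic combination R
  set R : Matrix (Fin 3) (Fin 3) ℝ := Q * Q + s • Q + p • 1 with hRdef
  have hfact : (Q + lam1 • 1) * (Q + lam2 • 1) = R := by
    rw [hRdef, hs, hp]
    simp only [add_mul, mul_add, smul_mul_assoc, mul_smul_comm, one_mul, mul_one,
      smul_smul, smul_add, add_smul]
    module
  have hQR : Q * R = 0 := by rw [← hfact]; exact hCH
  have hRQ : R * Q = 0 := by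
    have : R * Q = Q * R + s • (Q * Q) + p • Q - (s • (Q * Q) + p • Q) := by
      rw [hRdef]
      simp only [add_mul, smul_mul_assoc, one_mul, mul_one, mul_add, mul_smul_comm]
      rw [mul_assoc]
      abel
    rw [this, hQR]
    abel
  have hRR : R * R = p • R := by
    calc R * R = Q * (Q * R) + s • (Q * R) + p • R := by
          rw [hRdef]
          simp only [add_mul, smul_mul_assoc, one_mul, mul_one, mul_assoc]
      _ = p • R := by rw [hQR]; simp
  have hRL : R * L = p • L := by
    calc R * L = Q * (Q * L) + s • (Q * L) + p • L := by
          rw [hRdef]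
          simp only [add_mul, smul_mul_assoc, one_mul, mul_one, mul_assoc]
      _ = p • L := by rw [hQL]; simp
  have hLR : L * R = p • L := by
    calc L * R = (L * Q) * Q + s • (L * Q) + p • L := by
          rw [hRdef]
          simp only [mul_add, mul_smul_comm, mul_one, one_mul, mul_assoc]
      _ = p • L := by rw [hLQ]; simp
  have htrR : Matrix.trace R = p := by
    rw [hRdef]
    simp only [Matrix.trace_add, Matrix.trace_smul, Matrix.trace_one, htrQ, htrQ2,
      Fintype.card_fin, smul_eq_mul]
    push_cast
    ring
  -- mulVec facts for det
  have hQe : Q *ᵥ (fun _ => (1 : ℝ)) = 0 := by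
    funext i
    have h := hP1 i
    have h1 : ∑ j, (1 : Matrix (Fin 3) (Fin 3) ℝ) i j = 1 := by
      rw [Fin.sum_univ_three]
      fin_cases i <;> simp [Matrix.one_apply]
    simp only [Matrix.mulVec, dotProduct, mul_one, hQdef, Matrix.sub_apply,
      Finset.sum_sub_distrib, h, h1, Pi.zero_apply, sub_self]
  have hLe : L *ᵥ (fun _ => (1 : ℝ)) = (fun _ => (1 : ℝ)) := by
    funext i
    simp only [hLdef, Matrix.mulVec, dotProduct, Matrix.vecMulVec_apply, one_mul,
      mul_one]
    exact hμsum
  have hRe : R *ᵥ (fun _ => (1 : ℝ)) = p • (fun _ => (1 : ℝ)) := by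
    rw [hRdef]
    simp only [Matrix.add_mulVec, Matrix.smul_mulVec, Matrix.one_mulVec,
      ← Matrix.mulVec_mulVec, hQe]
    simp [Matrix.mulVec_zero, hQe]
  -- the idempotent difference D
  set D : Matrix (Fin 3) (Fin 3) ℝ := p⁻¹ • R - L with hDdef
  have hDD : D * D = D := by
    rw [hDdef]
    rw [sub_mul, mul_sub, mul_sub, smul_mul_assoc, smul_mul_assoc,
      Matrix.mul_smul, hRR, hRL, Matrix.mul_smul, hLR, hLL]
    rw [smul_smul, smul_smul, smul_smul, inv_mul_cancel₀ hpne]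
    have h1 : p⁻¹ * p⁻¹ * p = p⁻¹ := by field_simp
    rw [h1]
    simp only [one_smul]
    abel
  have htrD : Matrix.trace D = 0 := by
    rw [hDdef, Matrix.trace_sub, Matrix.trace_smul, htrR, htrL]
    simp [inv_mul_cancel₀ hpne]
  have hdetD : D.det = 0 := by
    rw [← Matrix.exists_mulVec_eq_zero_iff]
    refine ⟨fun _ => (1 : ℝ), ?_, ?_⟩
    · intro h
      have := congrFun h 0
      simp at this
    · rw [hDdef, Matrix.sub_mulVec, Matrix.smul_mulVec, hRe, hLe,
        smul_smul, inv_mul_cancel₀ hpne]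
      simp
  have hD0 : D = 0 := by
    have h3 := cubic_CH D
    rw [hDD, htrD, hdetD] at h3
    simp only [zero_smul, ne_eq, OfNat.ofNat_ne_zero, not_false_eq_true, zero_pow,
      zero_sub, zero_smul, sub_zero, zero_add] at h3
    have hD3 : D * D * D = 0 := by
      rw [h3]
      norm_num
    calc D = D * D * D := by rw [hDD, hDD]
      _ = 0 := hD3
  have hRL' : R = p • L := by
    have h : p⁻¹ • R = L := by
      have := sub_eq_zero.mp hD0
      exact this
    calc R = p • (p⁻¹ • R) := by rw [smul_smul, mul_inv_cancel₀ hpne, one_smul]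
      _ = p • L := by rw [h]
  have hQ2 : Q * Q = p • L - s • Q - p • 1 := by
    have : Q * Q + s • Q + p • 1 = p • L := by rw [← hRdef, hRL']
    linear_combination (norm := abel) this
  -- the induction
  suffices h : ∀ n : ℕ,
      P ^ n =
        (1 - (lam1 * (1 - lam2) ^ n - lam2 * (1 - lam1) ^ n) / (lam1 - lam2)) • L
          + (((1 - lam2) ^ n - (1 - lam1) ^ n) / (lam1 - lam2)) • Q
          + ((lam1 * (1 - lam2) ^ n - lam2 * (1 - lam1) ^ n) / (lam1 - lam2)) •
              (1 : Matrix (Fin 3) (Fin 3) ℝ) by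
    intro n _
    exact h n
  intro n
  induction n with
  | zero =>
    rw [pow_zero]
    simp only [pow_zero, mul_one]
    rw [div_self hne']
    simp
  | succ n ih =>
    have hP : P = Q + 1 := by rw [hQdef]; abel
    have hd' : ((1 - lam2) ^ (n + 1) - (1 - lam1) ^ (n + 1)) / (lam1 - lam2)
        = (1 - s) * (((1 - lam2) ^ n - (1 - lam1) ^ n) / (lam1 - lam2))
          + (lam1 * (1 - lam2) ^ n - lam2 * (1 - lam1) ^ n) / (lam1 - lam2) := by
      rw [hs]; field_simp; ring
    have hf' : (lam1 * (1 - lam2) ^ (n + 1) - lam2 * (1 - lam1) ^ (n + 1)) / (lam1 - lam2)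
        = (lam1 * (1 - lam2) ^ n - lam2 * (1 - lam1) ^ n) / (lam1 - lam2)
          - p * (((1 - lam2) ^ n - (1 - lam1) ^ n) / (lam1 - lam2)) := by
      rw [hp]; field_simp; ring
    set d : ℝ := ((1 - lam2) ^ n - (1 - lam1) ^ n) / (lam1 - lam2) with hd
    set f : ℝ := (lam1 * (1 - lam2) ^ n - lam2 * (1 - lam1) ^ n) / (lam1 - lam2) with hf
    have hmain : ∀ g d f : ℝ,
        (g • L + d • Q + f • (1 : Matrix (Fin 3) (Fin 3) ℝ)) * (Q + 1)
          = (g + d * p) • L + (d * (1 - s) + f) • Q + (f - d * p) • 1 := by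
      intro g d f
      simp only [add_mul, smul_mul_assoc, mul_add, mul_one, one_mul, hLQ, hQ2]
      module
    rw [pow_succ, ih, hd', hf', hP, hmain]
    module
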